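/- Completeness of the score construction in the literal-free case: for every instance I of schema S, every mapping m ∈ ⟦A⟧_I, and every triple t ∈ m(C) \ I, there exist a conjunctive query q ∈ Q(A), a mapping m* ∈ ⟦q⟧_{S(S)}, and a pattern c ∈ C such that t is an instance of the triple pattern unpack(m*({c})); hence every triple inferable by one application of r on any instance of S is modelled by score(S, r). -/
import Mathlib


/-- An RDF node: a URI or a literal. -/
inductive RNode where
  | uri : ℕ → RNode
  | lit : ℕ → RNode
deriving DecidableEq

/-- A term of a triple pattern: a constant (URI or literal) or a variable. -/
inductive RTerm where
  | cst : RNode → RTerm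
  | var : ℕ → RTerm
deriving DecidableEq

abbrev Triple := RNode × RNode × RNode
abbrev TPat := RTerm × RTerm × RTerm

def RNode.isLit : RNode → Prop
  | .lit _ => True
  | .uri _ => False

def applyT (m : ℕ → RNode) : RTerm → RNode
  | .cst c => c
  | .var v => m v

def applyTriple (m : ℕ → RNode) (p : TPat) : Triple :=
  (applyT m p.1, applyT m p.2.1, applyT m p.2.2)

/-- Variable `v` occurs in triple pattern `p`. -/
def occursIn (v : ℕ) (p : TPat) : Prop :=
  p.1 = RTerm.var v ∨ p.2.1 = RTerm.var v ∨ p.2.2 = RTerm.var v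

def varsPat (P : Set TPat) : Set ℕ := { v | ∃ p ∈ P, occursIn v p }

def constIn (c : RNode) (p : TPat) : Prop :=
  p.1 = RTerm.cst c ∨ p.2.1 = RTerm.cst c ∨ p.2.2 = RTerm.cst c

def constsPat (P : Set TPat) : Set RNode := { c | ∃ p ∈ P, constIn c p }

def constsGraph (I : Set Triple) : Set RNode :=
  { c | ∃ t ∈ I, t.1 = c ∨ t.2.1 = c ∨ t.2.2 = c }

/-- `I` is an instance of the triplestore schema `⟨G, Δ⟩`: every triple of `I`
is the image of some pattern of `G` under a mapping that binds no variable of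
the no-literal set `Δ` (occurring in the pattern) to a literal. -/
def isInstance (G : Set TPat) (Δ : Set ℕ) (I : Set Triple) : Prop :=
  ∀ t ∈ I, ∃ p ∈ G, ∃ m : ℕ → RNode,
    applyTriple m p = t ∧ ∀ v ∈ Δ, occursIn v p → ¬ (m v).isLit

/-- The sandbox graph: every variable of every pattern replaced by `lam`. -/
def sandbox (G : Set TPat) (lam : RNode) : Set Triple :=
  (applyTriple (fun _ => lam)) '' G

/-- One position of a rewriting: kept unchanged or replaced with `lam`. -/
def rewriteT (lam : RNode) (a b : RTerm) : Prop := b = a ∨ b = RTerm.cst lam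

/-- `q` is obtained from the triple pattern `p` by replacing any subset of its
three positions with the fresh constant `lam`. -/
def rewriteTriple (lam : RNode) (p q : TPat) : Prop :=
  rewriteT lam p.1 q.1 ∧ rewriteT lam p.2.1 q.2.1 ∧ rewriteT lam p.2.2 q.2.2

/-- No literal occurs among the constants of a graph pattern. -/
def litFree (P : Set TPat) : Prop := ∀ c ∈ constsPat P, ¬ c.isLit

/-- `t` is an instance of `unpack(g)`: since `unpack` replaces each occurrence
of `λ` in `g` by a distinct fresh variable (added to the no-literal set), `t`
must agree with `g` on every non-`λ` position and carry a non-literal at every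
`λ` position. -/
def matchesUnpack (lam : RNode) (g t : Triple) : Prop :=
  (g.1 = t.1 ∨ (g.1 = lam ∧ ¬ t.1.isLit)) ∧
  (g.2.1 = t.2.1 ∨ (g.2.1 = lam ∧ ¬ t.2.1.isLit)) ∧
  (g.2.2 = t.2.2 ∨ (g.2.2 = lam ∧ ¬ t.2.2.isLit))

/-- Keep position `a` if the schema position `b` is a constant, else `lam`. -/
def scoreSel (lam : RNode) (a b : RTerm) : RTerm :=
  match b with
  | .var _ => .cst lam
  | .cst _ => a

lemma scoreSel_rewrite (lam : RNode) (a b : RTerm) :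
    rewriteT lam a (scoreSel lam a b) := by
  cases b with
  | var w => exact Or.inr rfl
  | cst c => exact Or.inl rfl

lemma coord_main (lam : RNode) (m m' mg : ℕ → RNode) (S : Set RNode)
    (a b : RTerm)
    (heq : applyT mg b = applyT m a)
    (hm'eq : ∀ v, m v ∈ S → m' v = m v)
    (hmem : applyT (fun _ => lam) b ∈ S) :
    applyT m' (scoreSel lam a b) = applyT (fun _ => lam) b := by
  cases b with
  | var w => simp [scoreSel, applyT]
  | cst c =>
    simp only [applyT] at heq hmem
    cases a with
    | cst c' => simpa [scoreSel, applyT] using heq.symm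
    | var v =>
      simp only [applyT] at heq
      simp [scoreSel, applyT, hm'eq v (heq ▸ hmem), heq]

lemma coord_var (lam : RNode) (m mg : ℕ → RNode) (S : Set RNode) (v : ℕ) (b : RTerm)
    (heq : applyT mg b = m v)
    (hlitb : ∀ c, b = .cst c → ¬ c.isLit)
    (hnlv : ∀ w, b = .var w → ¬ (mg w).isLit)
    (hmem : applyT (fun _ => lam) b ∈ S) :
    ¬ (m v).isLit ∧ (m v ∈ S ∨ lam ∈ S) := by
  cases b with
  | cst c =>
    simp only [applyT] at heq hmem
    exact ⟨heq ▸ hlitb c rfl, Or.inl (heq ▸ hmem)⟩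
  | var w =>
    simp only [applyT] at heq hmem
    exact ⟨heq ▸ hnlv w rfl, Or.inr hmem⟩

lemma extract (G : Set TPat) (lam : RNode) (m mg : ℕ → RNode) (p g : TPat)
    (hgG : g ∈ G) (hEq : applyTriple mg g = applyTriple m p)
    (hnl : ∀ w ∈ varsPat G, occursIn w g → ¬ (mg w).isLit)
    (hGlf : litFree G)
    (v : ℕ) (hv : occursIn v p) :
    ¬ (m v).isLit ∧ (m v ∈ constsGraph (sandbox G lam) ∨ lam ∈ constsGraph (sandbox G lam)) := by
  have hsb : applyTriple (fun _ => lam) g ∈ sandbox G lam := ⟨g, hgG, rfl⟩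
  have hEq' : applyT mg g.1 = applyT m p.1 ∧ applyT mg g.2.1 = applyT m p.2.1 ∧
      applyT mg g.2.2 = applyT m p.2.2 := by
    simpa [applyTriple, Prod.ext_iff] using hEq
  rcases hv with h | h | h
  · refine coord_var lam m mg _ v g.1 ?_ ?_ ?_ ?_
    · rw [hEq'.1, h]; rfl
    · intro c hc; exact hGlf c ⟨g, hgG, Or.inl hc⟩
    · intro w hw; exact hnl w ⟨g, hgG, Or.inl hw⟩ (Or.inl hw)
    · exact ⟨applyTriple (fun _ => lam) g, hsb, Or.inl rfl⟩
  · refine coord_var lam m mg _ v g.2.1 ?_ ?_ ?_ ?_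
    · rw [hEq'.2.1, h]; rfl
    · intro c hc; exact hGlf c ⟨g, hgG, Or.inr (Or.inl hc)⟩
    · intro w hw; exact hnl w ⟨g, hgG, Or.inr (Or.inl hw)⟩ (Or.inr (Or.inl hw))
    · exact ⟨applyTriple (fun _ => lam) g, hsb, Or.inr (Or.inl rfl)⟩
  · refine coord_var lam m mg _ v g.2.2 ?_ ?_ ?_ ?_
    · rw [hEq'.2.2, h]; rfl
    · intro c hc; exact hGlf c ⟨g, hgG, Or.inr (Or.inr hc)⟩
    · intro w hw; exact hnl w ⟨g, hgG, Or.inr (Or.inr hw)⟩ (Or.inr (Or.inr hw))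
    · exact ⟨applyTriple (fun _ => lam) g, hsb, Or.inr (Or.inr rfl)⟩

/-- Completeness of the score construction in the literal-free
case: every triple inferable by one application of `r : A → C` on an instance
`I` of `S` (and not already in `I`) is an instance of `unpack(m*({c}))` for
some rewriting `q ∈ Q(A)`, mapping `m* ∈ ⟦q⟧_{S(S)}` and pattern `c ∈ C`. -/
theorem score_complete (G A C : Set TPat)
    (n : ℕ) (lam : RNode) (hlam : lam = RNode.uri n)
    (hG : litFree G) (hA : litFree A) (hC : litFree C)
    (hnoex : varsPat C ⊆ varsPat A)
    (huniqG : ∀ v : ℕ, ∀ p₁ ∈ G, ∀ p₂ ∈ G, occursIn v p₁ → occursIn v p₂ → p₁ = p₂)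
    (huniqC : ∀ v : ℕ, ∀ p₁ ∈ C, ∀ p₂ ∈ C, occursIn v p₁ → occursIn v p₂ → p₁ = p₂)
    (hfresh : lam ∉ constsPat G ∪ constsPat A ∪ constsPat C)
    (I : Set Triple) (hI : isInstance G (varsPat G) I)
    (m : ℕ → RNode) (hm : ∀ p ∈ A, applyTriple m p ∈ I)
    (c : TPat) (hc : c ∈ C) (t : Triple)
    (ht : applyTriple m c = t) (htI : t ∉ I) :
    ∃ (f : TPat → TPat) (m' : ℕ → RNode),
      (∀ p ∈ A, rewriteTriple lam p (f p)) ∧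
      (∀ p ∈ A, applyTriple m' (f p) ∈ sandbox G lam) ∧
      (∀ v ∈ varsPat A, m' v ∈ constsGraph (sandbox G lam)) ∧
      ∃ c' ∈ C, matchesUnpack lam (applyTriple m' c') t := by
  classical
  set S := constsGraph (sandbox G lam) with hSdef
  let m' : ℕ → RNode := fun v => if m v ∈ S then m v else lam
  have hm'eq : ∀ v, m v ∈ S → m' v = m v := fun v hv => if_pos hv
  -- witness schema pattern for each antecedent pattern
  let W : TPat → TPat := fun p =>
    if h : applyTriple m p ∈ I then (hI _ h).choose else p
  have hW : ∀ p ∈ A, (W p) ∈ G ∧ ∃ mg : ℕ → RNode,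
      applyTriple mg (W p) = applyTriple m p ∧
      ∀ w ∈ varsPat G, occursIn w (W p) → ¬ (mg w).isLit := by
    intro p hp
    have h := hm p hp
    have hWp : W p = (hI (applyTriple m p) h).choose := dif_pos h
    rw [hWp]
    exact (hI _ h).choose_spec
  let f : TPat → TPat := fun p =>
    (scoreSel lam p.1 (W p).1, scoreSel lam p.2.1 (W p).2.1, scoreSel lam p.2.2 (W p).2.2)
  -- key fact for every variable of A
  have key : ∀ v ∈ varsPat A, ¬ (m v).isLit ∧ (m v ∈ S ∨ lam ∈ S) := by
    intro v hv
    obtain ⟨p, hpA, hocc⟩ := hv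
    obtain ⟨hgG, mg, hEq, hnl⟩ := hW p hpA
    exact extract G lam m mg p (W p) hgG hEq hnl hG v hocc
  refine ⟨f, m', ?_, ?_, ?_, c, hc, ?_⟩
  · intro p _
    exact ⟨scoreSel_rewrite lam p.1 (W p).1, scoreSel_rewrite lam p.2.1 (W p).2.1,
      scoreSel_rewrite lam p.2.2 (W p).2.2⟩
  · intro p hp
    obtain ⟨hgG, mg, hEq, hnl⟩ := hW p hp
    have hEq' : applyT mg (W p).1 = applyT m p.1 ∧ applyT mg (W p).2.1 = applyT m p.2.1 ∧
        applyT mg (W p).2.2 = applyT m p.2.2 := by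
      simpa [applyTriple, Prod.ext_iff] using hEq
    have hsb : applyTriple (fun _ => lam) (W p) ∈ sandbox G lam := ⟨W p, hgG, rfl⟩
    have h1 := coord_main lam m m' mg S p.1 (W p).1 hEq'.1 hm'eq
      ⟨applyTriple (fun _ => lam) (W p), hsb, Or.inl rfl⟩
    have h2 := coord_main lam m m' mg S p.2.1 (W p).2.1 hEq'.2.1 hm'eq
      ⟨applyTriple (fun _ => lam) (W p), hsb, Or.inr (Or.inl rfl)⟩
    have h3 := coord_main lam m m' mg S p.2.2 (W p).2.2 hEq'.2.2 hm'eq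
      ⟨applyTriple (fun _ => lam) (W p), hsb, Or.inr (Or.inr rfl)⟩
    have : applyTriple m' (f p) = applyTriple (fun _ => lam) (W p) := by
      simp only [applyTriple, f, h1, h2, h3]
    rw [this]
    exact hsb
  · intro v hv
    obtain ⟨hnlit, hin⟩ := key v hv
    show (if m v ∈ S then m v else lam) ∈ S
    by_cases h : m v ∈ S
    · rw [if_pos h]; exact h
    · rw [if_neg h]
      rcases hin with h' | h'
      · exact absurd h' h
      · exact h'
  · subst ht
    have hvarC : ∀ v, occursIn v c → ¬ (m v).isLit ∧ (m v ∈ S ∨ lam ∈ S) := by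
      intro v hv
      exact key v (hnoex ⟨c, hc, hv⟩)
    have coordC : ∀ a : RTerm, (∀ v, a = .var v → occursIn v c) →
        applyT m' a = applyT m a ∨ (applyT m' a = lam ∧ ¬ (applyT m a).isLit) := by
      intro a ha
      cases a with
      | cst k => exact Or.inl rfl
      | var v =>
        obtain ⟨hnlit, hin⟩ := hvarC v (ha v rfl)
        show m' v = m v ∨ (m' v = lam ∧ ¬ (m v).isLit)
        by_cases h : m v ∈ S
        · exact Or.inl (if_pos h)
        · exact Or.inr ⟨if_neg h, hnlit⟩
    exact ⟨coordC c.1 (fun v hv => Or.inl hv), coordC c.2.1 (fun v hv => Or.inr (Or.inl hv)),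
      coordC c.2.2 (fun v hv => Or.inr (Or.inr hv))⟩
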